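/- Let k be a reduced commutative ring of characteristic p. Then for every Witt vector w ∈ W(k[X₁,…,Xₙ]) and every ε > 0, γ_ε(p·w) = γ_ε(w) + 1, where γ_ε(w) = inf { i + ε p^{-i}·(−deg(w_i)) : i ∈ ℕ } on Witt coordinates. -/

import Mathlib

open WittVector
open scoped Classical

/-- The Gauss-norm-style map `γ_ε` on Witt vectors over a polynomial ring:
`γ_ε(w) = inf { i + ε p^{-i}·(−deg(w_i)) : i ∈ ℕ }`, with the convention that a zero
coordinate contributes `+∞` (its degree is `−∞`). -/
noncomputable def gaussGamma (p : ℕ) [Fact p.Prime] {n : ℕ} (k : Type*) [CommRing k]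
    (ε : ℝ) (w : WittVector p (MvPolynomial (Fin n) k)) : EReal :=
  ⨅ i : ℕ,
    if w.coeff i = 0 then (⊤ : EReal)
    else (((i : ℝ) - ε * ((p : ℝ)⁻¹) ^ i * ((w.coeff i).totalDegree : ℝ) : ℝ) : EReal)

section AuxGamma

open MvPolynomial

variable {p : ℕ} [Fact p.Prime] {σ : Type*} {k : Type*} [CommRing k] [CharP k p]

lemma coeff_pow_p (Q : MvPolynomial σ k) (d : σ →₀ ℕ) :
    coeff (p • d) (Q ^ p) = (coeff d Q) ^ p := by
  have hp : p ≠ 0 := (Fact.out : p.Prime).ne_zero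
  have hinj : Function.Injective (fun v : σ →₀ ℕ => p • v) := by
    intro a b hab
    ext x
    have := DFunLike.congr_fun hab x
    simp only [Finsupp.smul_apply, smul_eq_mul] at this
    exact Nat.eq_of_mul_eq_mul_left (Nat.pos_of_ne_zero hp) this
  conv_lhs => rw [Q.as_sum]
  have hfr : (∑ v ∈ Q.support, monomial v (coeff v Q)) ^ p
      = ∑ v ∈ Q.support, (monomial v (coeff v Q)) ^ p := by
    have := map_sum (frobenius (MvPolynomial σ k) p)
      (fun v => monomial v (coeff v Q)) Q.support
    simpa [frobenius_def] using this
  rw [hfr]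
  simp only [monomial_pow]
  rw [coeff_sum]
  by_cases hd : d ∈ Q.support
  · rw [Finset.sum_eq_single d]
    · simp [coeff_monomial]
    · intro b _ hb
      rw [coeff_monomial, if_neg (fun h => hb (hinj h))]
    · exact fun h => absurd hd h
  · rw [Finset.sum_eq_zero, MvPolynomial.notMem_support_iff.mp hd, zero_pow hp]
    intro b hb
    rw [coeff_monomial, if_neg]
    intro h
    exact hd (hinj h ▸ hb)

variable [IsReduced k]

lemma pow_p_eq_zero_iff (Q : MvPolynomial σ k) : Q ^ p = 0 ↔ Q = 0 := by
  constructor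
  · intro h
    ext d
    have := coeff_pow_p (p := p) Q d
    rw [h, coeff_zero] at this
    have hn : IsNilpotent (coeff d Q) := ⟨p, this.symm⟩
    simpa using hn.eq_zero
  · intro h; rw [h, zero_pow (Fact.out : p.Prime).ne_zero]

lemma totalDegree_pow_p (Q : MvPolynomial σ k) (hQ : Q ≠ 0) :
    (Q ^ p).totalDegree = p * Q.totalDegree := by
  refine le_antisymm (totalDegree_pow Q p) ?_
  obtain ⟨d, hd, hd2⟩ := Q.support.exists_mem_eq_sup
    (MvPolynomial.support_nonempty.mpr hQ) (fun m => m.sum fun _ e => e)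
  have hc : coeff (p • d) (Q ^ p) ≠ 0 := by
    rw [coeff_pow_p]
    intro h
    have : IsNilpotent (coeff d Q) := ⟨p, h⟩
    exact (MvPolynomial.mem_support_iff.mp hd) (by simpa using this.eq_zero)
  have hmem : p • d ∈ (Q ^ p).support := MvPolynomial.mem_support_iff.mpr hc
  have hle := le_totalDegree hmem
  have hsum : (p • d).sum (fun _ e => e) = p * d.sum (fun _ e => e) := by
    rw [Finsupp.sum_smul_index (fun i => rfl)]
    simp [Finsupp.sum, Finset.mul_sum]
  rw [MvPolynomial.totalDegree, hd2]
  calc p * (d.sum fun _ e => e) = (p • d).sum (fun _ e => e) := hsum.symm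
    _ ≤ _ := hle

lemma ereal_one_ne_bot : (1 : EReal) ≠ ⊥ := by
  rw [← EReal.coe_one]; exact EReal.coe_ne_bot 1

lemma ereal_neg_one_ne_bot : (-1 : EReal) ≠ ⊥ := by
  rw [← EReal.coe_one, ← EReal.coe_neg]; exact EReal.coe_ne_bot _

lemma ereal_add_one_sub_one (x : EReal) : x + 1 - 1 = x := by
  induction x using EReal.rec with
  | bot => simp [sub_eq_add_neg]
  | coe x => rw [show (1 : EReal) = ((1:ℝ) : EReal) from rfl,
      ← EReal.coe_add, sub_eq_add_neg, ← EReal.coe_neg, ← EReal.coe_add]; norm_num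
  | top => rw [sub_eq_add_neg]; rw [EReal.top_add_of_ne_bot ereal_one_ne_bot, EReal.top_add_of_ne_bot ereal_neg_one_ne_bot]

lemma ereal_sub_one_add_one (x : EReal) : x - 1 + 1 = x := by
  induction x using EReal.rec with
  | bot => simp [sub_eq_add_neg]
  | coe x => rw [show (1 : EReal) = ((1:ℝ) : EReal) from rfl, sub_eq_add_neg,
      ← EReal.coe_neg, ← EReal.coe_add, ← EReal.coe_add]; norm_num
  | top => rw [sub_eq_add_neg]; rw [EReal.top_add_of_ne_bot ereal_neg_one_ne_bot, EReal.top_add_of_ne_bot ereal_one_ne_bot]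

noncomputable def erealAddOneIso : EReal ≃o EReal where
  toFun := (· + 1)
  invFun := (· - 1)
  left_inv := ereal_add_one_sub_one
  right_inv := ereal_sub_one_add_one
  map_rel_iff' := by
    intro a b
    constructor
    · intro h
      have := add_le_add_left h (-1 : EReal)
      simpa [← sub_eq_add_neg, ereal_add_one_sub_one] using this
    · intro h; exact add_le_add_left h 1

lemma ereal_iInf_add_one {ι : Sort*} (f : ι → EReal) : ⨅ i, (f i + 1) = (⨅ i, f i) + 1 :=
  (erealAddOneIso.map_iInf f).symm

end AuxGamma

/-- if `k` is a reduced commutative ring of characteristic `p`, then for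
every Witt vector `w ∈ W(k[X₁,…,Xₙ])` and every `ε > 0`,
`γ_ε(p·w) = γ_ε(w) + 1`. -/
theorem gaussGamma_p_mul (p : ℕ) [Fact p.Prime] {n : ℕ} (k : Type*) [CommRing k]
    [CharP k p] [IsReduced k] (ε : ℝ) (hε : 0 < ε)
    (w : WittVector p (MvPolynomial (Fin n) k)) :
    gaussGamma p k ε ((p : WittVector p (MvPolynomial (Fin n) k)) * w) =
      gaussGamma p k ε w + 1 := by
  have hpR : (p : ℝ) ≠ 0 := Nat.cast_ne_zero.mpr (Fact.out : p.Prime).ne_zero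
  set pw := (p : WittVector p (MvPolynomial (Fin n) k)) * w with hpw
  have hmul : ∀ i, pw.coeff (i + 1) = (w.coeff i) ^ p := by
    intro i; rw [hpw, mul_comm, mul_charP_coeff_succ]
  have h0 : pw.coeff 0 = 0 := by rw [hpw, mul_comm]; exact mul_charP_coeff_zero w
  rw [gaussGamma, gaussGamma]
  set G : ℕ → EReal := fun i =>
    if pw.coeff i = 0 then (⊤ : EReal)
    else (((i : ℝ) - ε * ((p : ℝ)⁻¹) ^ i * ((pw.coeff i).totalDegree : ℝ) : ℝ) : EReal)
    with hG
  set F : ℕ → EReal := fun i =>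
    if w.coeff i = 0 then (⊤ : EReal)
    else (((i : ℝ) - ε * ((p : ℝ)⁻¹) ^ i * ((w.coeff i).totalDegree : ℝ) : ℝ) : EReal)
    with hF
  have hG0 : G 0 = ⊤ := by rw [hG]; simp [h0]
  have hkey : ∀ i, G (i + 1) = F i + 1 := by
    intro i
    simp only [hG, hF]
    by_cases hw : w.coeff i = 0
    · rw [if_pos (by rw [hmul i, hw]; exact zero_pow (Fact.out : p.Prime).ne_zero),
        if_pos hw, EReal.top_add_of_ne_bot ereal_one_ne_bot]
    · have hne : pw.coeff (i + 1) ≠ 0 := by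
        rw [hmul i]; exact fun h => hw ((pow_p_eq_zero_iff _).mp h)
      simp only [if_neg hne, if_neg hw]
      have hdeg : (pw.coeff (i + 1)).totalDegree = p * (w.coeff i).totalDegree := by
        rw [hmul i]; exact totalDegree_pow_p _ hw
      rw [hdeg, show (1 : EReal) = ((1 : ℝ) : EReal) from rfl, ← EReal.coe_add]
      congr 1
      push_cast
      field_simp
      linear_combination (-(ε * (↑p)⁻¹ ^ i * ↑(w.coeff i).totalDegree)) * mul_inv_cancel₀ hpR
  calc ⨅ i, G i = ⨅ i, G (i + 1) := by
        refine le_antisymm (le_iInf fun i => iInf_le _ (i + 1)) (le_iInf fun i => ?_)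
        cases i with
        | zero => rw [hG0]; exact le_top
        | succ j => exact iInf_le _ j
    _ = ⨅ i, (F i + 1) := by simp_rw [hkey]
    _ = (⨅ i, F i) + 1 := ereal_iInf_add_one F
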